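/- Let n ≥ 3 be odd, c = 1, κ² = 4m where n = 2m - 1. Then the cubic t³ + pt² + qt + r (with p, q, r as in the 3-type class-B formulas with c = 1) factors as [t² - (4(m+1)(2m-1)/m)t + 16(m-1)(m+1)²/m]·[t - 8(m+1)]. -/

import Mathlib

/-- Specialization of the class-B cubic at κ² = 4m, c = 1, n = 2m - 1. -/
theorem classB_cubic_at_4m (m : ℕ) (hm : 2 ≤ m) (κ : ℝ)
    (hκ2 : κ ^ 2 = 4 * (m : ℝ)) :
    let n : ℝ := 2 * (m : ℝ) - 1
    let p : ℝ := -(1 / κ ^ 2) * (κ ^ 2 + 4) * (κ ^ 2 + 2 * (3 * n + 1))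
    let q : ℝ := (4 / κ ^ 4) * (κ ^ 2 + 4) *
      ((n + 1) * κ ^ 4 + (3 * n ^ 2 + 6 * n - 1) * κ ^ 2 + 8 * (n ^ 2 - 1))
    let r : ℝ := -(4 * (n - 1) * (n + 3) / κ ^ 4) * (κ ^ 2 + 4) ^ 2 *
      (κ ^ 2 + 2 * (n + 1))
    ∀ t : ℝ, t ^ 3 + p * t ^ 2 + q * t + r =
      (t ^ 2 - (4 * ((m : ℝ) + 1) * (2 * (m : ℝ) - 1) / (m : ℝ)) * t +
        16 * ((m : ℝ) - 1) * ((m : ℝ) + 1) ^ 2 / (m : ℝ)) * (t - 8 * ((m : ℝ) + 1)) := by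
  intro n p q r t
  have hm0 : (m : ℝ) ≠ 0 := by positivity
  simp only [n, p, q, r, hκ2]
  have hκ : κ ≠ 0 := by
    intro h; rw [h] at hκ2; norm_num at hκ2
    have : (0:ℝ) < m := by positivity
    linarith
  have hκ4 : κ ^ 4 = 16 * (m:ℝ)^2 := by
    have : κ ^ 4 = (κ^2)^2 := by ring
    rw [this, hκ2]; ring
  field_simp [hκ4]
  rw [hκ4]
  ring
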